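/- Let K ⊆ E be a compact λ-strongly convex set with λ > 0, and let p, q ∈ E be nonzero vectors. If x_p ∈ K maximizes x ↦ ⟨p, x⟩ over K and x_q ∈ K maximizes x ↦ ⟨q, x⟩ over K, then ‖x_p − x_q‖ ≤ 2‖p − q‖ / (λ(‖p‖ + ‖q‖)). -/

import Mathlib

open scoped RealInnerProductSpace

/-- Key lemma: at a maximizer `x` of `⟪p, ·⟫` over a `λ`-strongly convex set,
`⟪p, x - z⟫ ≥ (λ/2)‖p‖‖x - z‖²` for all `z ∈ K`. -/
theorem strongly_convex_maximizer_ineq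
    {E : Type*} [NormedAddCommGroup E] [InnerProductSpace ℝ E]
    (K : Set E) (lam : ℝ) (hlam : 0 < lam)
    (hK : ∀ x ∈ K, ∀ z ∈ K, ∀ θ : ℝ, θ ∈ Set.Icc (0:ℝ) 1 →
      Metric.closedBall (θ • x + (1-θ) • z) (θ*(1-θ)*(lam/2)*‖x - z‖^2) ⊆ K)
    (p : E) (hp : p ≠ 0) (x : E) (hx : x ∈ K)
    (hmax : ∀ u ∈ K, ⟪p, u⟫ ≤ ⟪p, x⟫) (z : E) (hz : z ∈ K) :
    lam/2 * ‖p‖ * ‖x - z‖^2 ≤ ⟪p, x - z⟫ := by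
  have hpn : (0:ℝ) < ‖p‖ := norm_pos_iff.mpr hp
  set c : ℝ := lam/2 * ‖p‖ * ‖x - z‖^2 with hc
  set A : ℝ := ⟪p, x - z⟫ with hA
  have hA0 : 0 ≤ A := by
    have := hmax z hz
    rw [hA, inner_sub_right]; linarith
  have key : ∀ θ : ℝ, θ ∈ Set.Ico (0:ℝ) 1 → θ * c ≤ A := by
    intro θ hθ
    obtain ⟨hθ0, hθ1⟩ := hθ
    set r : ℝ := θ*(1-θ)*(lam/2)*‖x - z‖^2 with hr
    have hr0 : 0 ≤ r := by
      apply mul_nonneg (mul_nonneg (mul_nonneg hθ0 (by linarith)) (by linarith))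
        (sq_nonneg _)
    set y : E := θ • x + (1-θ) • z + (r/‖p‖) • p with hy
    have hyK : y ∈ K := by
      apply hK x hx z hz θ ⟨hθ0, le_of_lt hθ1⟩
      simp only [Metric.mem_closedBall, dist_eq_norm, hy]
      rw [add_sub_cancel_left, norm_smul, norm_div, Real.norm_eq_abs,
        abs_of_nonneg hr0, Real.norm_eq_abs, abs_of_pos hpn,
        div_mul_cancel₀ _ (ne_of_gt hpn)]
    have hle := hmax y hyK
    have hinner : ⟪p, y⟫ = θ * ⟪p, x⟫ + (1-θ) * ⟪p, z⟫ + r * ‖p‖ := by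
      rw [hy, inner_add_right, inner_add_right, real_inner_smul_right,
        real_inner_smul_right, real_inner_smul_right, real_inner_self_eq_norm_sq]
      field_simp
    rw [hinner] at hle
    have h1 : r * ‖p‖ ≤ (1-θ) * (⟪p, x⟫ - ⟪p, z⟫) := by nlinarith
    have h2 : r * ‖p‖ = (1-θ) * (θ * c) := by rw [hr, hc]; ring
    have h3 : θ * c ≤ ⟪p, x⟫ - ⟪p, z⟫ :=
      (mul_le_mul_iff_right₀ (by linarith : (0:ℝ) < 1 - θ)).mp (h2 ▸ h1)
    rw [hA, inner_sub_right]; linarith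
  by_contra hcon
  push_neg at hcon
  have hcpos : 0 < c := lt_of_le_of_lt hA0 hcon
  have hAc : A / c < 1 := (div_lt_one hcpos).mpr hcon
  have hAc0 : 0 ≤ A / c := div_nonneg hA0 hcpos.le
  obtain ⟨θ, hθ1, hθ2⟩ := exists_between hAc
  have := key θ ⟨le_trans hAc0 hθ1.le, hθ2⟩
  have : A < θ * c := by
    rw [div_lt_iff₀ hcpos] at hθ1; linarith [hθ1]
  linarith [key θ ⟨le_trans hAc0 hθ1.le, hθ2⟩]

/-- Maximizers of linear functions over a `λ`-strongly convex compact set are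
Hölder-stable in the linear functional. -/
theorem strongly_convex_set_linear_maximizers_close
    {E : Type*} [NormedAddCommGroup E] [InnerProductSpace ℝ E]
    (K : Set E) (hKconv : Convex ℝ K) (hKcomp : IsCompact K)
    (lam : ℝ) (hlam : 0 < lam)
    -- `K` is a `λ`-strongly convex set
    (hK : ∀ x ∈ K, ∀ z ∈ K, ∀ θ : ℝ, θ ∈ Set.Icc (0:ℝ) 1 →
      Metric.closedBall (θ • x + (1-θ) • z) (θ*(1-θ)*(lam/2)*‖x - z‖^2) ⊆ K)
    (p q : E) (hp : p ≠ 0) (hq : q ≠ 0)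
    (xp xq : E)
    (hxp : xp ∈ K ∧ ∀ u ∈ K, ⟪p, u⟫ ≤ ⟪p, xp⟫)
    (hxq : xq ∈ K ∧ ∀ u ∈ K, ⟪q, u⟫ ≤ ⟪q, xq⟫) :
    ‖xp - xq‖ ≤ 2*‖p - q‖ / (lam * (‖p‖ + ‖q‖)) := by
  obtain ⟨hxpK, hxpmax⟩ := hxp
  obtain ⟨hxqK, hxqmax⟩ := hxq
  have hpn : (0:ℝ) < ‖p‖ := norm_pos_iff.mpr hp
  have hqn : (0:ℝ) < ‖q‖ := norm_pos_iff.mpr hq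
  have h1 := strongly_convex_maximizer_ineq K lam hlam hK p hp xp hxpK hxpmax xq hxqK
  have h2 := strongly_convex_maximizer_ineq K lam hlam hK q hq xq hxqK hxqmax xp hxpK
  have hnorm : ‖xq - xp‖ = ‖xp - xq‖ := norm_sub_rev _ _
  rw [hnorm] at h2
  have hsum : lam/2 * (‖p‖ + ‖q‖) * ‖xp - xq‖^2 ≤ ⟪p - q, xp - xq⟫ := by
    have : ⟪p - q, xp - xq⟫ = ⟪p, xp - xq⟫ + ⟪q, xq - xp⟫ := by
      rw [inner_sub_left]
      have : ⟪q, xq - xp⟫ = - ⟪q, xp - xq⟫ := by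
        rw [← inner_neg_right, neg_sub]
      rw [this]; ring
    rw [this]; nlinarith
  have hCS : ⟪p - q, xp - xq⟫ ≤ ‖p - q‖ * ‖xp - xq‖ :=
    real_inner_le_norm _ _
  rcases eq_or_lt_of_le (norm_nonneg (xp - xq)) with h | h
  · rw [← h]
    positivity
  · rw [le_div_iff₀ (by positivity)]
    have : lam/2 * (‖p‖ + ‖q‖) * ‖xp - xq‖^2 ≤ ‖p - q‖ * ‖xp - xq‖ :=
      le_trans hsum hCS
    nlinarith
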